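/- arXiv:0811.1015 — 3 statements merged into one kernel-verified Lean document; each statement's English description precedes it below -/
import Mathlib

section
/- The matrix Φ_n² with entries Φ_n²(m,k) = C(n-m,k)/C(n,k) is invertible with inverse [Φ_n²]^{-1}(i,j) = (-1)^{i+j-n} C(i,n-j) C(n,i), i.e., ∑_{k=0}^{n} [C(n-m,k)/C(n,k)] · (-1)^{k+j-n} C(k,n-j) C(n,k) = δ_{m,j} for all 0 ≤ m,j ≤ n. -/
open Finset

private lemma alt_sum_choose_ext (d M : ℕ) (hd : d < M) :
    ∑ i ∈ Finset.range M, (-1 : ℤ) ^ i * d.choose i =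
      if d = 0 then 1 else 0 := by
  rw [← Int.alternating_sum_range_choose (n := d)]
  symm
  apply Finset.sum_subset
  · exact Finset.range_subset_range.2 (by omega)
  · intro i _ hi
    simp only [Finset.mem_range, not_lt] at hi
    rw [Nat.choose_eq_zero_of_lt (show d < i by omega)]
    simp

private lemma key_int (a b N : ℕ) (ha : a ≤ N) :
    ∑ k ∈ Finset.range (N + 1), (-1 : ℤ) ^ k * a.choose k * k.choose b =
      (-1 : ℤ) ^ b * (if a = b then 1 else 0) := by
  by_cases hba : b ≤ a
  · have h1 : ∑ k ∈ Finset.range (N + 1), (-1 : ℤ) ^ k * a.choose k * k.choose b =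
        ∑ k ∈ Finset.Ico b (N + 1), (-1 : ℤ) ^ k * a.choose k * k.choose b := by
      symm
      apply Finset.sum_subset
      · intro k hk
        simp only [Finset.mem_Ico] at hk
        exact Finset.mem_range.2 hk.2
      · intro k hk hk'
        simp only [Finset.mem_range] at hk
        simp only [Finset.mem_Ico, not_and, not_le] at hk'
        have hkb : k < b := by
          by_contra hc
          exact hk' (Nat.le_of_not_lt hc) hk
        rw [Nat.choose_eq_zero_of_lt (show k < b from hkb)]
        simp
    rw [h1, Finset.sum_Ico_eq_sum_range]
    have h2 : ∀ i ∈ Finset.range (N + 1 - b),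
        (-1 : ℤ) ^ (b + i) * a.choose (b + i) * (b + i).choose b =
          ((-1 : ℤ) ^ b * a.choose b) * ((-1 : ℤ) ^ i * (a - b).choose i) := by
      intro i _
      by_cases hia : b + i ≤ a
      · have hmul := Nat.choose_mul (n := a) (k := b + i) (s := b) (by omega)
        have h3 : (b + i).choose b = (b + i).choose i := by
          have := Nat.choose_symm (n := b + i) (k := b) (by omega)
          simpa [Nat.add_sub_cancel_left] using this.symm
        have h4 : a.choose (b + i) * (b + i).choose b = a.choose b * (a - b).choose i := by
          simpa [Nat.add_sub_cancel_left] using hmul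
        rw [pow_add]
        have h4' : (a.choose (b + i) : ℤ) * (b + i).choose b
            = a.choose b * (a - b).choose i := by exact_mod_cast congrArg Nat.cast h4
        linear_combination ((-1:ℤ) ^ b * (-1:ℤ) ^ i) * h4'
      · rw [Nat.choose_eq_zero_of_lt (show a < b + i by omega),
          Nat.choose_eq_zero_of_lt (show a - b < i by omega)]
        simp
    rw [Finset.sum_congr rfl h2, ← Finset.mul_sum,
      alt_sum_choose_ext (a - b) (N + 1 - b) (by omega)]
    by_cases h : a = b
    · simp [h, Nat.sub_eq_zero_iff_le.2 (le_of_eq h.symm)]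
    · rw [if_neg (by omega), if_neg h]; ring
  · have hz : ∀ k ∈ Finset.range (N + 1),
        (-1 : ℤ) ^ k * a.choose k * k.choose b = 0 := by
      intro k _
      by_cases hk : k ≤ a
      · rw [Nat.choose_eq_zero_of_lt (show k < b by omega)]; ring
      · rw [Nat.choose_eq_zero_of_lt (show a < k by omega)]; ring
    rw [Finset.sum_congr rfl hz, Finset.sum_const_zero, if_neg (by omega), mul_zero]

/-- The matrix `Φ_n²(m,k) = C(n-m,k)/C(n,k)` has inverse with entries
`(-1)^{i+j-n} C(i,n-j) C(n,i)`:
`∑_{k=0}^{n} [C(n-m,k)/C(n,k)] (-1)^{k+j-n} C(k,n-j) C(n,k) = δ_{m,j}`. -/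
theorem duality_kernel2_inverse (n m j : ℕ) (hm : m ≤ n) (hj : j ≤ n) :
    ∑ k ∈ Finset.range (n + 1),
        (((n - m).choose k : ℝ) / (n.choose k : ℝ)) *
          ((-1 : ℝ) ^ (k + j + n) * (k.choose (n - j) : ℝ) * (n.choose k : ℝ)) =
      if m = j then 1 else 0 := by
  have step : ∀ k ∈ Finset.range (n + 1),
      (((n - m).choose k : ℝ) / (n.choose k : ℝ)) *
          ((-1 : ℝ) ^ (k + j + n) * (k.choose (n - j) : ℝ) * (n.choose k : ℝ)) =
        ((-1 : ℝ) ^ (j + n)) *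
          (((-1 : ℤ) ^ k * (n - m).choose k * k.choose (n - j) : ℤ) : ℝ) := by
    intro k hk
    have hkn : k ≤ n := Nat.lt_succ_iff.mp (Finset.mem_range.mp hk)
    have hc : (n.choose k : ℝ) ≠ 0 := Nat.cast_ne_zero.2 (Nat.choose_pos hkn).ne'
    push_cast
    rw [pow_add, pow_add]
    field_simp
    ring
  rw [Finset.sum_congr rfl step, ← Finset.mul_sum, ← Int.cast_sum,
    key_int (n - m) (n - j) n (by omega)]
  by_cases h : m = j
  · rw [if_pos (by omega), if_pos h]
    push_cast
    rw [mul_one, ← pow_add, show j + n + (n - j) = 2 * n by omega, pow_mul]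
    norm_num
  · rw [if_neg (by omega), if_neg h]
    simp
end

section
/- Let p : [0,1] → [0,1] with q = 1 - p completely monotone, and let Π_n(k,k') = C(n,k') p(k/n)^{k'} (1-p(k/n))^{n-k'} be the biased Wright-Fisher forward transition matrix, and P_n(i,j) = C(n,j) ∑_{l=0}^{j} (-1)^{j-l} C(j,l) q(1-l/n)^i. Then the one-step duality identity Π_n Φ_n = Φ_n P_n' holds, where Φ_n(m,k) = C(n-m,k)/C(n,k). -/
open Finset

private lemma aux_choose_swap {n m k' : ℕ} (hm : m ≤ n) (hk' : k' ≤ n) :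
    n.choose k' * (n - k').choose m = n.choose m * (n - m).choose k' := by
  by_cases h : k' + m ≤ n
  · have h1 := Nat.choose_mul (n := n) (Nat.le_add_right k' m)
    have h2 := Nat.choose_mul (n := n) (Nat.le_add_left m k')
    have h3 : (k' + m).choose k' = (k' + m).choose m := by
      rw [← Nat.choose_symm (Nat.le_add_left m k'), Nat.add_sub_cancel]
    simp only [Nat.add_sub_cancel, Nat.add_sub_cancel_left] at h1 h2
    rw [← h1, h3, h2]
  · have e1 : (n - k').choose m = 0 := Nat.choose_eq_zero_of_lt (by omega)
    have e2 : (n - m).choose k' = 0 := Nat.choose_eq_zero_of_lt (by omega)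
    rw [e1, e2]; ring

private lemma aux_choose_mul {N j l : ℕ} (h : l ≤ j) :
    N.choose j * j.choose l = N.choose l * (N - l).choose (j - l) := by
  by_cases hj : j ≤ N
  · exact Nat.choose_mul h
  · have e1 : N.choose j = 0 := Nat.choose_eq_zero_of_lt (by omega)
    by_cases hl : l ≤ N
    · have e2 : (N - l).choose (j - l) = 0 := Nat.choose_eq_zero_of_lt (by omega)
      rw [e1, e2]; ring
    · have e2 : N.choose l = 0 := Nat.choose_eq_zero_of_lt (by omega)
      rw [e1, e2]; ring

private lemma aux_alt_sum (M : ℕ) :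
    (∑ t ∈ range (M + 1), (-1 : ℝ) ^ t * M.choose t) = if M = 0 then 1 else 0 := by
  cases M with
  | zero => simp
  | succ M =>
    have h := add_pow (-1 : ℝ) 1 M.succ
    simp only [one_pow, mul_one, neg_add_cancel] at h
    rw [← h, zero_pow M.succ_ne_zero, if_neg M.succ_ne_zero]

/-- One-step duality identity `Pi_n Φ_n = Φ_n P_n'` for the biased Wright-Fisher model:
with `q = 1 - p` completely monotone on `(0,1)`,
`Pi_n(k,k') = C(n,k') p(k/n)^{k'} (1-p(k/n))^{n-k'}`,
`P_n(i,j) = C(n,j) ∑_{l≤j} (-1)^{j-l} C(j,l) q(1-l/n)^i` and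
`Φ_n(m,k) = C(n-m,k)/C(n,k)`, the `(k,m)` entry of `Pi_n Φ_n` equals the
`(k,m)` entry of `Φ_n P_n'`. -/
theorem wright_fisher_duality (n : ℕ) (hn : 1 ≤ n) (p : ℝ → ℝ)
    (hp : ∀ x ∈ Set.Icc (0 : ℝ) 1, p x ∈ Set.Icc (0 : ℝ) 1)
    (hq : ∀ (l : ℕ) (x : ℝ), x ∈ Set.Ioo (0 : ℝ) 1 →
      0 ≤ (-1 : ℝ) ^ l * iteratedDeriv l (fun y => 1 - p y) x)
    (Pi P Φ : ℕ → ℕ → ℝ)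
    (hPi : ∀ k k', Pi k k' = (n.choose k' : ℝ) *
        p ((k : ℝ) / n) ^ k' * (1 - p ((k : ℝ) / n)) ^ (n - k'))
    (hP : ∀ i j, P i j = (n.choose j : ℝ) * ∑ l ∈ Finset.range (j + 1),
        (-1 : ℝ) ^ (j - l) * (j.choose l : ℝ) * (1 - p (1 - (l : ℝ) / n)) ^ i)
    (hΦ : ∀ m k, Φ m k = ((n - m).choose k : ℝ) / (n.choose k : ℝ)) :
    ∀ k m, k ≤ n → m ≤ n →
      ∑ k' ∈ Finset.range (n + 1), Pi k k' * Φ k' m =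
        ∑ j ∈ Finset.range (n + 1), Φ k j * P m j := by
  intro k m hk hm
  have hn0 : (n : ℝ) ≠ 0 := Nat.cast_ne_zero.mpr (by omega)
  set pk := p ((k : ℝ) / n) with hpk
  have hchoose_ne : ∀ j, j ≤ n → ((n.choose j : ℝ)) ≠ 0 := fun j hj =>
    Nat.cast_ne_zero.mpr (Nat.choose_pos hj).ne'
  -- LHS = (1 - pk)^m
  have hLHS : ∑ k' ∈ Finset.range (n + 1), Pi k k' * Φ k' m = (1 - pk) ^ m := by
    have step1 : ∀ k' ∈ range (n + 1), Pi k k' * Φ k' m =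
        ((n - m).choose k' : ℝ) * (pk ^ k' * (1 - pk) ^ (n - k')) := by
      intro k' hk'
      rw [mem_range, Nat.lt_succ_iff] at hk'
      rw [hPi, hΦ]
      have hnat : (n.choose k' : ℝ) * ((n - k').choose m : ℝ) =
          (n.choose m : ℝ) * ((n - m).choose k' : ℝ) := by
        exact_mod_cast congrArg (Nat.cast (R := ℝ)) (aux_choose_swap hm hk')
      have hcoef : (n.choose k' : ℝ) * (((n - k').choose m : ℝ) / (n.choose m : ℝ)) =
          ((n - m).choose k' : ℝ) := by
        rw [mul_div_assoc', div_eq_iff (hchoose_ne m hm)]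
        linarith [hnat]
      calc (n.choose k' : ℝ) * pk ^ k' * (1 - pk) ^ (n - k') *
            (((n - k').choose m : ℝ) / (n.choose m : ℝ))
          = ((n.choose k' : ℝ) * (((n - k').choose m : ℝ) / (n.choose m : ℝ))) *
            (pk ^ k' * (1 - pk) ^ (n - k')) := by ring
        _ = _ := by rw [hcoef]
    rw [Finset.sum_congr rfl step1]
    rw [← Finset.sum_subset (Finset.range_subset_range.mpr (by omega : n - m + 1 ≤ n + 1))
      (by intro x hx hx2
          rw [mem_range, Nat.lt_succ_iff] at hx hx2
          have : (n - m).choose x = 0 := Nat.choose_eq_zero_of_lt (by omega)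
          rw [this]; simp)]
    have step2 : ∀ k' ∈ range (n - m + 1),
        ((n - m).choose k' : ℝ) * (pk ^ k' * (1 - pk) ^ (n - k')) =
        (pk ^ k' * (1 - pk) ^ (n - m - k') * ((n - m).choose k' : ℝ)) * (1 - pk) ^ m := by
      intro k' hk'
      rw [mem_range, Nat.lt_succ_iff] at hk'
      have : n - k' = (n - m - k') + m := by omega
      rw [this, pow_add]
      ring
    rw [Finset.sum_congr rfl step2, ← Finset.sum_mul, ← add_pow pk (1 - pk) (n - m)]
    simp
  -- RHS = (1 - pk)^m
  have hRHS : ∑ j ∈ Finset.range (n + 1), Φ k j * P m j = (1 - pk) ^ m := by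
    have step1 : ∀ j ∈ range (n + 1), Φ k j * P m j =
        ∑ l ∈ range (n + 1), ((n - k).choose j : ℝ) * ((-1 : ℝ) ^ (j - l) *
          (j.choose l : ℝ) * (1 - p (1 - (l : ℝ) / n)) ^ m) := by
      intro j hj
      rw [mem_range, Nat.lt_succ_iff] at hj
      have hsimp : ∀ S : ℝ, ((n - k).choose j : ℝ) / (n.choose j : ℝ) *
          ((n.choose j : ℝ) * S) = ((n - k).choose j : ℝ) * S := by
        intro S
        field_simp
        rw [mul_assoc, mul_div_assoc, mul_div_cancel_left₀ S (hchoose_ne j hj)]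
      rw [hΦ, hP, hsimp, Finset.mul_sum]
      refine (Finset.sum_subset (Finset.range_subset_range.mpr (by omega : j + 1 ≤ n + 1)) ?_)
      intro l hl hl2
      rw [mem_range, Nat.lt_succ_iff] at hl hl2
      have : j.choose l = 0 := Nat.choose_eq_zero_of_lt (by omega)
      rw [this]; simp
    rw [Finset.sum_congr rfl step1, Finset.sum_comm]
    have step2 : ∀ l ∈ range (n + 1),
        (∑ j ∈ range (n + 1), ((n - k).choose j : ℝ) * ((-1 : ℝ) ^ (j - l) *
          (j.choose l : ℝ) * (1 - p (1 - (l : ℝ) / n)) ^ m)) =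
        (if l = n - k then 1 else 0) * (1 - p (1 - (l : ℝ) / n)) ^ m := by
      intro l hl
      rw [mem_range, Nat.lt_succ_iff] at hl
      have key : (∑ j ∈ range (n + 1), ((n - k).choose j : ℝ) * ((-1 : ℝ) ^ (j - l) *
          (j.choose l : ℝ))) = if l = n - k then 1 else 0 := by
        rw [← Finset.sum_subset (show Finset.Ico l (n + 1) ⊆ range (n + 1) from
            fun x hx => mem_range.mpr (Finset.mem_Ico.mp hx).2) ?_]
        rotate_left
        · intro x hx hx2
          rw [mem_range, Nat.lt_succ_iff] at hx
          rw [Finset.mem_Ico, not_and_or] at hx2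
          have hxl : x < l := by omega
          have : x.choose l = 0 := Nat.choose_eq_zero_of_lt hxl
          rw [this]; simp
        · rw [Finset.sum_Ico_eq_sum_range]
          have step3 : ∀ t ∈ range (n + 1 - l),
              ((n - k).choose (l + t) : ℝ) * ((-1 : ℝ) ^ (l + t - l) *
                ((l + t).choose l : ℝ)) =
              ((n - k).choose l : ℝ) * ((-1 : ℝ) ^ t * ((n - k - l).choose t : ℝ)) := by
            intro t ht
            have hnat : ((n - k).choose (l + t) : ℝ) * ((l + t).choose l : ℝ) =
                ((n - k).choose l : ℝ) * ((n - k - l).choose (l + t - l) : ℝ) := by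
              exact_mod_cast congrArg (Nat.cast (R := ℝ))
                (aux_choose_mul (Nat.le_add_right l t))
            rw [Nat.add_sub_cancel_left] at hnat ⊢
            linear_combination ((-1 : ℝ) ^ t) * hnat
          rw [Finset.sum_congr rfl step3, ← Finset.mul_sum]
          rw [← Finset.sum_subset (Finset.range_subset_range.mpr
            (by omega : n - k - l + 1 ≤ n + 1 - l)) ?_]
          rotate_left
          · intro x hx hx2
            rw [mem_range, Nat.lt_succ_iff] at hx2
            have : (n - k - l).choose x = 0 := Nat.choose_eq_zero_of_lt (by omega)
            rw [this]; simp
          · rw [aux_alt_sum]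
            by_cases hcase : l = n - k
            · subst hcase
              simp
            · rw [if_neg hcase]
              by_cases hcase2 : n - k - l = 0
              · rw [if_pos hcase2, mul_one]
                have : (n - k).choose l = 0 := Nat.choose_eq_zero_of_lt (by omega)
                rw [this]; simp
              · rw [if_neg hcase2, mul_zero]
      calc (∑ j ∈ range (n + 1), ((n - k).choose j : ℝ) * ((-1 : ℝ) ^ (j - l) *
              (j.choose l : ℝ) * (1 - p (1 - (l : ℝ) / n)) ^ m))
          = (∑ j ∈ range (n + 1), ((n - k).choose j : ℝ) * ((-1 : ℝ) ^ (j - l) *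
              (j.choose l : ℝ))) * (1 - p (1 - (l : ℝ) / n)) ^ m := by
            rw [Finset.sum_mul]; apply Finset.sum_congr rfl; intros; ring
        _ = _ := by rw [key]
    rw [Finset.sum_congr rfl step2]
    simp only [ite_mul, one_mul, zero_mul]
    rw [Finset.sum_ite_eq' (range (n + 1)) (n - k)
      (fun l => (1 - p (1 - (l : ℝ) / n)) ^ m)]
    rw [if_pos (by rw [mem_range]; omega)]
    have harg : 1 - ((n - k : ℕ) : ℝ) / n = (k : ℝ) / n := by
      rw [Nat.cast_sub hk]
      field_simp
      ring
    rw [harg]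
  rw [hLHS, hRHS]
end

section
/- For the affine mutation bias p(x) = (1-μ₂)x + μ₁(1-x) with κ = 1-(μ₁+μ₂) ≥ 0, the backward matrix P_n(i,j) = C(n,j) ∑_{l=0}^{j} (-1)^{j-l} C(j,l) (μ₂ + κ l/n)^i is lower triangular (P_n(i,j) = 0 for j > i) with diagonal entries P_n(i,i) = (n)_i (κ/n)^i, and its row sums equal (1-μ₁)^i. -/
open Finset

lemma A_succ (j : ℕ) (f : ℕ → ℝ) :
    ∑ l ∈ range (j+2), (-1:ℝ)^l * ((j+1).choose l) * f l
    = ∑ l ∈ range (j+1), (-1:ℝ)^l * (j.choose l) * (f l - f (l+1)) := by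
  have key : ∑ l ∈ range (j+2), (-1:ℝ)^l * ((j+1).choose l) * f l
      = (∑ l ∈ range (j+1), (-1:ℝ)^l * (j.choose l) * f l)
        - ∑ l ∈ range (j+1), (-1:ℝ)^l * (j.choose l) * f (l+1) := by
    rw [Finset.sum_range_succ' (fun l => (-1:ℝ)^l * ((j+1).choose l) * f l)]
    have e1 : ∀ l, (-1:ℝ)^(l+1) * (((j+1).choose (l+1) : ℕ) : ℝ) * f (l+1)
        = (-1:ℝ)^(l+1) * (j.choose l : ℝ) * f (l+1)
          + (-1:ℝ)^(l+1) * (j.choose (l+1) : ℝ) * f (l+1) := by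
      intro l
      rw [Nat.choose_succ_succ]
      push_cast
      ring
    simp only [e1, Finset.sum_add_distrib]
    have e2 : (∑ l ∈ range (j+1), (-1:ℝ)^(l+1) * (j.choose (l+1) : ℝ) * f (l+1))
        + (-1:ℝ)^0 * (((j+1).choose 0 : ℕ) : ℝ) * f 0
        = ∑ l ∈ range (j+1), (-1:ℝ)^l * (j.choose l : ℝ) * f l := by
      have h := Finset.sum_range_succ' (fun l => (-1:ℝ)^l * (j.choose l : ℝ) * f l) (j+1)
      rw [Finset.sum_range_succ (fun l => (-1:ℝ)^l * (j.choose l : ℝ) * f l) (j+1)] at h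
      simp only [Nat.choose_succ_self, Nat.cast_zero, mul_zero, zero_mul, mul_one,
        Nat.choose_zero_right, Nat.cast_one, add_zero, pow_zero, one_mul] at h ⊢
      linarith [h]
    have e3 : ∀ l, (-1:ℝ)^(l+1) * (j.choose l : ℝ) * f (l+1)
        = -((-1:ℝ)^l * (j.choose l : ℝ) * f (l+1)) := by intro l; ring
    simp only [e3, Finset.sum_neg_distrib]
    linarith [e2]
  rw [key, ← Finset.sum_sub_distrib]
  apply Finset.sum_congr rfl; intro l _; ring

lemma alt_pow (j : ℕ) : ∀ m ≤ j,
    ∑ l ∈ range (j+1), (-1:ℝ)^l * (j.choose l) * (l:ℝ)^m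
      = if m = j then (-1:ℝ)^j * j.factorial else 0 := by
  induction j with
  | zero =>
    intro m hm; interval_cases m; simp
  | succ j ih =>
    intro m hm
    have hrec := A_succ j (fun l => (l:ℝ)^m)
    rw [show j+1+1 = j+2 from rfl] at hrec
    rw [hrec]
    have expand : ∀ l ∈ range (j+1), (-1:ℝ)^l * (j.choose l) * ((l:ℝ)^m - ((l+1:ℕ):ℝ)^m)
        = ∑ k ∈ range m, -((m.choose k : ℝ) * ((-1:ℝ)^l * (j.choose l) * (l:ℝ)^k)) := by
      intro l _
      have hb : (((l+1:ℕ)):ℝ)^m = ∑ k ∈ range m, (l:ℝ)^k * (m.choose k) + (l:ℝ)^m := by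
        push_cast
        rw [add_pow, Finset.sum_range_succ]
        simp
      have hr : (-1:ℝ)^l * (j.choose l)
            * ((l:ℝ)^m - (∑ k ∈ range m, (l:ℝ)^k * (m.choose k) + (l:ℝ)^m))
          = (-((-1:ℝ)^l * (j.choose l))) * ∑ k ∈ range m, (l:ℝ)^k * (m.choose k) := by ring
      rw [hb, hr, Finset.mul_sum]
      exact Finset.sum_congr rfl (fun k _ => by ring)
    rw [Finset.sum_congr rfl expand, Finset.sum_comm]
    have inner : ∀ k ∈ range m,
        ∑ l ∈ range (j+1), -((m.choose k:ℝ) * ((-1:ℝ)^l * (j.choose l) * (l:ℝ)^k))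
        = -((m.choose k:ℝ) * (if k = j then (-1:ℝ)^j * j.factorial else 0)) := by
      intro k hk
      rw [Finset.sum_neg_distrib, ← Finset.mul_sum,
        ih k (by have := Finset.mem_range.mp hk; omega)]
    rw [Finset.sum_congr rfl inner]
    by_cases hmj : m = j+1
    · subst hmj
      rw [Finset.sum_eq_single j]
      · simp only [if_pos rfl, if_pos rfl, Nat.choose_succ_self_right, Nat.factorial_succ]
        push_cast
        ring
      · intro k _ hkj
        rw [if_neg hkj, mul_zero, neg_zero]
      · intro h; exact absurd (Finset.self_mem_range_succ j) h
    · rw [if_neg hmj]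
      apply Finset.sum_eq_zero
      intro k hk
      have : k ≠ j := by have := Finset.mem_range.mp hk; omega
      rw [if_neg this, mul_zero, neg_zero]

lemma neg_one_sub_pow {j l : ℕ} (hl : l ≤ j) : (-1:ℝ)^(j-l) = (-1:ℝ)^j * (-1:ℝ)^l := by
  conv_rhs => rw [show j = (j-l)+l by omega]
  rw [pow_add, mul_assoc, ← pow_add]
  have : ((-1:ℝ))^(l+l) = 1 := Even.neg_one_pow ⟨l, rfl⟩
  rw [this, mul_one]

lemma alt_affine (j i : ℕ) (a c : ℝ) (hij : i ≤ j) :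
    ∑ l ∈ range (j+1), (-1:ℝ)^(j-l) * (j.choose l) * (a + c*l)^i
    = if i = j then (j.factorial : ℝ) * c^j else 0 := by
  have step : ∀ l ∈ range (j+1), (-1:ℝ)^(j-l) * (j.choose l) * (a + c*(l:ℝ))^i
      = ∑ m ∈ range (i+1), ((-1:ℝ)^j * ((i.choose m:ℝ) * c^m * a^(i-m)))
          * ((-1:ℝ)^l * (j.choose l) * (l:ℝ)^m) := by
    intro l hl
    rw [add_comm a (c*(l:ℝ)), add_pow, neg_one_sub_pow (by simpa using Nat.lt_succ_iff.mp (Finset.mem_range.mp hl)),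
      Finset.mul_sum]
    exact Finset.sum_congr rfl fun m _ => by rw [mul_pow]; ring
  rw [Finset.sum_congr rfl step, Finset.sum_comm]
  have inner : ∀ m ∈ range (i+1),
      ∑ l ∈ range (j+1), ((-1:ℝ)^j * ((i.choose m:ℝ) * c^m * a^(i-m)))
          * ((-1:ℝ)^l * (j.choose l) * (l:ℝ)^m)
      = ((-1:ℝ)^j * ((i.choose m:ℝ) * c^m * a^(i-m)))
          * (if m = j then (-1:ℝ)^j * j.factorial else 0) := by
    intro m hm
    rw [← Finset.mul_sum, alt_pow j m (by have := Finset.mem_range.mp hm; omega)]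
  rw [Finset.sum_congr rfl inner]
  by_cases hij' : i = j
  · subst hij'
    rw [Finset.sum_eq_single i]
    · simp only [if_pos rfl, Nat.choose_self, Nat.cast_one, Nat.sub_self, pow_zero]
      have : ((-1:ℝ)^i) * ((-1:ℝ)^i) = 1 := by
        rw [← pow_add]; exact Even.neg_one_pow ⟨i, rfl⟩
      calc (-1:ℝ)^i * (1 * c^i * 1) * ((-1:ℝ)^i * i.factorial)
          = ((-1:ℝ)^i * (-1:ℝ)^i) * (c^i * i.factorial) := by ring
        _ = (i.factorial : ℝ) * c^i := by rw [this]; ring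
    · intro m _ hmj; rw [if_neg hmj, mul_zero]
    · intro h; exact absurd (Finset.self_mem_range_succ i) h
  · rw [if_neg hij']
    apply Finset.sum_eq_zero
    intro m hm
    have : m ≠ j := by have := Finset.mem_range.mp hm; omega
    rw [if_neg this, mul_zero]

lemma alt_choose_real (m : ℕ) :
    ∑ k ∈ range (m+1), (-1:ℝ)^k * (m.choose k) = if m = 0 then 1 else 0 := by
  have h := Int.alternating_sum_range_choose (n := m)
  have := congrArg (fun z : ℤ => (z : ℝ)) h
  push_cast at this
  rw [this]

lemma rowsum (n : ℕ) (g : ℕ → ℝ) :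
    ∑ j ∈ range (n+1), (n.choose j : ℝ) *
      ∑ l ∈ range (j+1), (-1:ℝ)^(j-l) * (j.choose l) * g l = g n := by
  have e1 : ∀ j ∈ range (n+1), (n.choose j : ℝ) *
      ∑ l ∈ range (j+1), (-1:ℝ)^(j-l) * (j.choose l) * g l
      = ∑ l ∈ range (j+1), (-1:ℝ)^(j-l) * ((n.choose j : ℝ) * (j.choose l)) * g l := by
    intro j _
    rw [Finset.mul_sum]
    exact Finset.sum_congr rfl fun l _ => by ring
  rw [Finset.sum_congr rfl e1]
  simp only [Finset.range_eq_Ico]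
  rw [← Finset.sum_Ico_Ico_comm 0 (n+1)
    (fun l j => (-1:ℝ)^(j-l) * ((n.choose j : ℝ) * (j.choose l)) * g l)]
  have inner : ∀ l ∈ Finset.Ico 0 (n+1),
      ∑ j ∈ Finset.Ico l (n+1), (-1:ℝ)^(j-l) * ((n.choose j : ℝ) * (j.choose l)) * g l
      = (if l = n then 1 else 0) * g l := by
    intro l hl
    have hln : l ≤ n := by have := (Finset.mem_Ico.mp hl).2; omega
    rw [Finset.sum_Ico_eq_sum_range]
    have e2 : ∀ k ∈ range (n+1-l), (-1:ℝ)^((l+k)-l) * ((n.choose (l+k) : ℝ) * ((l+k).choose l)) * g l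
        = ((n.choose l : ℝ) * g l) * ((-1:ℝ)^k * ((n-l).choose k)) := by
      intro k hk
      have hkn : l + k ≤ n := by have := Finset.mem_range.mp hk; omega
      have hc : n.choose (l+k) * (l+k).choose l = n.choose l * (n-l).choose k := by
        have := Nat.choose_mul (n := n) (Nat.le_add_right l k)
        simpa using this
      rw [show (l+k)-l = k by omega]
      rw [show ((n.choose (l+k) : ℝ) * ((l+k).choose l)) = ((n.choose l : ℝ) * ((n-l).choose k)) by
        exact_mod_cast congrArg (Nat.cast (R := ℝ)) hc]
      ring
    rw [Finset.sum_congr rfl e2, ← Finset.mul_sum]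
    rw [show n+1-l = (n-l)+1 by omega, alt_choose_real]
    by_cases hln' : l = n
    · subst hln'; simp
    · rw [if_neg (by omega), if_neg hln', mul_zero, zero_mul]
  rw [Finset.sum_congr rfl inner]
  have e3 : ∀ x ∈ Finset.Ico 0 (n+1), (if x = n then (1:ℝ) else 0) * g x
      = if x = n then g x else 0 := fun x _ => by split <;> simp
  rw [Finset.sum_congr rfl e3, Finset.sum_ite_eq' (Finset.Ico 0 (n+1)) n g]
  simp

/-- For the affine mutation bias with `κ = 1-(μ₁+μ₂) ≥ 0`, the backward matrix
`P_n(i,j) = C(n,j) ∑_{l=0}^{j} (-1)^{j-l} C(j,l) (μ₂ + κ l/n)^i` is lower triangular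
(`P_n(i,j) = 0` for `j > i`), has diagonal entries `P_n(i,i) = (n)_i (κ/n)^i`, and its
row sums equal `(1-μ₁)^i`. -/
theorem mutation_backward_matrix (μ₁ μ₂ : ℝ) (h1 : μ₁ ∈ Set.Icc (0 : ℝ) 1)
    (h2 : μ₂ ∈ Set.Icc (0 : ℝ) 1) (hκ : μ₁ + μ₂ ≤ 1)
    (n : ℕ) (hn : 1 ≤ n) (i : ℕ) (hi : i ≤ n) :
    (∀ j, i < j →
      (n.choose j : ℝ) * ∑ l ∈ Finset.range (j + 1),
          (-1 : ℝ) ^ (j - l) * (j.choose l : ℝ) *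
            (μ₂ + (1 - (μ₁ + μ₂)) * l / n) ^ i = 0) ∧
    ((n.choose i : ℝ) * ∑ l ∈ Finset.range (i + 1),
        (-1 : ℝ) ^ (i - l) * (i.choose l : ℝ) *
          (μ₂ + (1 - (μ₁ + μ₂)) * l / n) ^ i =
      (n.descFactorial i : ℝ) * ((1 - (μ₁ + μ₂)) / n) ^ i) ∧
    (∑ j ∈ Finset.range (n + 1),
        (n.choose j : ℝ) * ∑ l ∈ Finset.range (j + 1),
          (-1 : ℝ) ^ (j - l) * (j.choose l : ℝ) *
            (μ₂ + (1 - (μ₁ + μ₂)) * l / n) ^ i =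
      (1 - μ₁) ^ i) := by
  have hn0 : (n:ℝ) ≠ 0 := by positivity
  have hshape : ∀ l : ℕ, μ₂ + (1 - (μ₁ + μ₂)) * (l:ℝ) / n
      = μ₂ + ((1 - (μ₁ + μ₂)) / n) * (l:ℝ) := fun l => by ring
  refine ⟨?_, ?_, ?_⟩
  · intro j hj
    simp only [hshape]
    rw [alt_affine j i μ₂ _ (le_of_lt hj), if_neg (by omega), mul_zero]
  · simp only [hshape]
    rw [alt_affine i i μ₂ _ le_rfl, if_pos rfl,
      Nat.descFactorial_eq_factorial_mul_choose]
    push_cast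
    ring
  · rw [rowsum n (fun l => (μ₂ + (1 - (μ₁ + μ₂)) * (l:ℝ) / n) ^ i)]
    have : μ₂ + (1 - (μ₁ + μ₂)) * (n:ℝ) / n = 1 - μ₁ := by
      field_simp
      ring
    rw [this]
end
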